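/- Let σ = (v_1, …, v_n) be a route. For every start time s with s ≥ e(v_1), the schedule along σ with start time s satisfies all deadline constraints (t_k ≤ l(v_k) for all 1 ≤ k ≤ n) if and only if F(σ) holds and s ≤ L(σ). -/

import Mathlib

/-- Begin-of-service time at the last vertex of the route `(v :: rest)` when service at `v`
begins at time `s`: `t₁ = s`, `t_{k+1} = max (t_k + d v_k v_{k+1}) (e v_{k+1})`. -/
def lastTime {V : Type*} (d : V → V → ℝ) (e : V → ℝ) : ℝ → V → List V → ℝ
  | s, _, [] => s
  | s, v, w :: rest => lastTime d e (max (s + d v w) (e w)) w rest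

/-- Total travel time `T(σ)` along the route `(v :: rest)`. -/
def travel {V : Type*} (d : V → V → ℝ) : V → List V → ℝ
  | _, [] => 0
  | v, w :: rest => d v w + travel d w rest

/-- Latest feasible start time `L(σ) = min_{1 ≤ k ≤ n} (l(v_k) - T_k(σ))` of route `(v :: rest)`. -/
def latest {V : Type*} (d : V → V → ℝ) (l : V → ℝ) : V → List V → ℝ
  | v, [] => l v
  | v, w :: rest => min (l v) (latest d l w rest - d v w)

/-- The schedule along route `(v :: rest)` starting at time `s` satisfies all deadline
constraints `t_k ≤ l(v_k)`. -/
def feasFrom {V : Type*} (d : V → V → ℝ) (e l : V → ℝ) : ℝ → V → List V → Prop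
  | s, v, [] => s ≤ l v
  | s, v, w :: rest => s ≤ l v ∧ feasFrom d e l (max (s + d v w) (e w)) w rest

/-- `E(σ)`: begin-of-service time at the last vertex of the earliest schedule
(start time `s = e v₁`). -/
def earliestEnd {V : Type*} (d : V → V → ℝ) (e : V → ℝ) (v : V) (rest : List V) : ℝ :=
  lastTime d e (e v) v rest

/-- `F(σ)`: the route `(v :: rest)` is time-window feasible, i.e. the earliest schedule
(start time `s = e v₁`) satisfies all deadline constraints. -/
def twFeasible {V : Type*} (d : V → V → ℝ) (e l : V → ℝ) (v : V) (rest : List V) : Prop :=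
  feasFrom d e l (e v) v rest

/-- For every start time `s ≥ e v₁`, the schedule along `σ = (v :: rest)` with start time `s`
satisfies all deadline constraints iff `F σ` holds and `s ≤ L σ`. -/
theorem feasFrom_iff {V : Type*} (d : V → V → ℝ) (e l : V → ℝ)
    (hd : ∀ u v, 0 ≤ d u v) (hel : ∀ v, e v ≤ l v)
    (v : V) (rest : List V) (s : ℝ) (hs : e v ≤ s) :
    feasFrom d e l s v rest ↔ twFeasible d e l v rest ∧ s ≤ latest d l v rest := by
  induction rest generalizing v s with
  | nil =>
    simp only [feasFrom, twFeasible, latest]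
    constructor
    · exact fun h => ⟨hel v, h⟩
    · exact fun h => h.2
  | cons w rest ih =>
    simp only [feasFrom, twFeasible, latest]
    rw [ih w _ (le_max_right _ _), ih w _ (le_max_right _ _)]
    constructor
    · rintro ⟨h1, h2, h3⟩
      have hsd : s + d v w ≤ latest d l w rest := le_trans (le_max_left _ _) h3
      refine ⟨⟨le_trans hs h1, h2, max_le (le_trans (add_le_add_left hs _) hsd)
        (le_trans (le_max_right _ _) h3)⟩, le_min h1 (by linarith)⟩
    · rintro ⟨⟨h1, h2, h3⟩, h4⟩
      have h5 := le_trans h4 (min_le_right _ _)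
      exact ⟨le_trans h4 (min_le_left _ _), h2,
        max_le (by linarith) (le_trans (le_max_right _ _) h3)⟩
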